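/- The set C_p(ℕ) := {α : ℕ → ℕ | the set {y : α⁻¹({y}) is infinite} is infinite} has the property that its complement T(ℕ) \ C_p(ℕ) is a maximal subsemigroup of T(ℕ): it is closed under composition, and for every α ∈ C_p(ℕ), the subsemigroup generated by (T(ℕ) \ C_p(ℕ)) ∪ {α} equals T(ℕ). -/

import Mathlib

/-- `C_p`: maps with infinitely many infinite fibers. -/
def CpSet (α : ℕ → ℕ) : Prop := {y : ℕ | (α ⁻¹' {y}).Infinite}.Infinite

/-- A set of transformations closed under composition. -/
def IsSubsemigroupT (S : Set (ℕ → ℕ)) : Prop :=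
  ∀ f g : ℕ → ℕ, f ∈ S → g ∈ S → (g ∘ f) ∈ S

/-- T(ℕ) \ C_p(ℕ) is a maximal subsemigroup: it is closed under composition, and
adjoining any element of C_p(ℕ) generates all of T(ℕ). -/
theorem compl_Cp_maximal :
    (∀ α β : ℕ → ℕ, ¬ CpSet α → ¬ CpSet β → ¬ CpSet (β ∘ α)) ∧
    (∀ α : ℕ → ℕ, CpSet α →
      ∀ S : Set (ℕ → ℕ), IsSubsemigroupT S → (∀ f, ¬ CpSet f → f ∈ S) →
        α ∈ S → S = Set.univ) := by
  constructor
  · -- closure under composition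
    intro α β hα hβ hc
    classical
    have hBfin : {y : ℕ | (β ⁻¹' {y}).Infinite}.Finite := Set.not_infinite.mp hβ
    have hY : ({y : ℕ | ((β ∘ α) ⁻¹' {y}).Infinite} \
        {y : ℕ | (β ⁻¹' {y}).Infinite}).Infinite := hc.diff hBfin
    have key : ∀ y ∈ {y : ℕ | ((β ∘ α) ⁻¹' {y}).Infinite} \
        {y : ℕ | (β ⁻¹' {y}).Infinite},
        ∃ z, β z = y ∧ (α ⁻¹' {z}).Infinite := by
      rintro y ⟨hy1, hy2⟩
      by_contra h
      push_neg at h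
      have hfin : ((β ∘ α) ⁻¹' {y}).Finite := by
        have heq : (β ∘ α) ⁻¹' {y} = ⋃ z ∈ β ⁻¹' {y}, α ⁻¹' {z} := by
          ext x
          simp [Set.mem_preimage]
        rw [heq]
        apply Set.Finite.biUnion (Set.not_infinite.mp hy2)
        intro z hz
        exact Set.not_infinite.mp (fun hi => hi (h z hz))
      exact hy1 hfin
    apply hα
    set g : ℕ → ℕ := fun y =>
      if h : ∃ z, β z = y ∧ (α ⁻¹' {z}).Infinite then h.choose else 0 with hgdef
    have hg : ∀ y ∈ {y : ℕ | ((β ∘ α) ⁻¹' {y}).Infinite} \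
        {y : ℕ | (β ⁻¹' {y}).Infinite},
        β (g y) = y ∧ (α ⁻¹' {g y}).Infinite := by
      intro y hy
      have h := key y hy
      simp only [hgdef, dif_pos h]
      exact ⟨h.choose_spec.1, h.choose_spec.2⟩
    apply Set.infinite_of_injOn_mapsTo (f := g) ?_ ?_ hY
    · intro y1 hy1 y2 hy2 heq
      have e1 := (hg y1 hy1).1
      have e2 := (hg y2 hy2).1
      rw [← e1, ← e2, heq]
    · intro y hy
      exact (hg y hy).2
  · -- maximality
    intro α hα S hS hScompl hαS
    classical
    ext f
    simp only [Set.mem_univ, iff_true]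
    set Y := hα.natEmbedding with hYdef
    set q : ℕ → ℕ := fun x =>
      if h : ∃ i, ((Y i : ℕ) = x) then h.choose else 0 with hqdef
    have hqY : ∀ i, q (Y i) = i := by
      intro i
      have h : ∃ j, ((Y j : ℕ) = (Y i : ℕ)) := ⟨i, rfl⟩
      have hc : q (Y i) = h.choose := dif_pos h
      have := h.choose_spec
      have : h.choose = i := Y.injective (Subtype.ext this)
      rw [hc, this]
    have hq : ¬ CpSet q := by
      intro hcq
      have hsub : {m : ℕ | (q ⁻¹' {m}).Infinite} ⊆ {0} := by
        intro m hm
        by_contra hm0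
        have hm0' : m ≠ 0 := hm0
        have hsub2 : q ⁻¹' {m} ⊆ {(Y m : ℕ)} := by
          intro x hx
          have hx' : q x = m := hx
          by_cases h : ∃ i, ((Y i : ℕ) = x)
          · have hc : q x = h.choose := dif_pos h
            have hspec := h.choose_spec
            have hcm : h.choose = m := by rw [← hc, hx']
            rw [← hspec, hcm]
            rfl
          · have : q x = 0 := dif_neg h
            exact (hm0' (by rw [← hx', this])).elim
        exact hm ((Set.finite_singleton _).subset hsub2)
      exact hcq ((Set.finite_singleton 0).subset hsub)
    have hfib : ∀ i : ℕ, ((fun x => q (α x)) ⁻¹' {i}).Infinite := by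
      intro i
      have hsub : α ⁻¹' {(Y i : ℕ)} ⊆ (fun x => q (α x)) ⁻¹' {i} := by
        intro x hx
        have : α x = (Y i : ℕ) := hx
        show q (α x) ∈ ({i} : Set ℕ)
        rw [this, hqY]
        rfl
      exact Set.Infinite.mono hsub (Y i).2
    set E : ∀ i : ℕ, ℕ ↪ ((fun x => q (α x)) ⁻¹' {i} : Set ℕ) :=
      fun i => (hfib i).natEmbedding with hEdef
    set h : ℕ → ℕ := fun n => (E (f n) n : ℕ) with hhdef
    have hπh : ∀ n, q (α (h n)) = f n := fun n => (E (f n) n).2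
    have hinj : Function.Injective h := by
      intro n m hnm
      have hf : f n = f m := by
        rw [← hπh n, ← hπh m]
        exact congrArg (fun x => q (α x)) hnm
      have hnm' : h n = h m := hnm
      rw [hhdef] at hnm'
      simp only at hnm'
      rw [hf] at hnm'
      exact (E (f m)).injective (Subtype.ext hnm')
    have hh : ¬ CpSet h := by
      intro hch
      obtain ⟨m, hm⟩ := hch.nonempty
      exact hm (Set.Subsingleton.finite (fun a ha b hb =>
        hinj (ha.trans hb.symm)))
    have h1 : h ∈ S := hScompl h hh
    have h2 : (α ∘ h) ∈ S := hS h α h1 hαS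
    have h3 : (q ∘ (α ∘ h)) ∈ S := hS (α ∘ h) q h2 (hScompl q hq)
    have hfeq : f = q ∘ (α ∘ h) := funext fun n => (hπh n).symm
    rw [hfeq]
    exact h3
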